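/- Fix n ≥ 2 and complex numbers q_{ij} (1 ≤ i, j ≤ n) with q_{ii} = 1, q_{ji} = q_{ij}^{-1} and |q_{ij}| = 1, and let S = (S_1, …, S_n) be the tuple on the q-commuting Fock space Γ_q(ℂⁿ), S_i = P_{Γ_q(ℂⁿ)} V_i |_{Γ_q(ℂⁿ)}, with vacuum vector ω. Then for every i and every p ≥ 0: ⟨ω, (S_i + S_i^*)^p ω⟩ = 0 if p is odd, and ⟨ω, (S_i + S_i^*)^p ω⟩ = C_{p/2} = (1/(p/2 + 1)) · binom(p, p/2) (the Catalan number) if p is even. In particular S_i + S_i^* has semicircular distribution with respect to the vacuum state. -/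

import Mathlib

open scoped BigOperators InnerProductSpace

/-- `q^σ(x) = ∏ q_{x_{σ⁻¹(k)} x_{σ⁻¹(i)}}`, the product over all pairs `i < k`
with `σ⁻¹(i) > σ⁻¹(k)`. -/
noncomputable def qSigma {n : ℕ} (q : Fin n → Fin n → ℂ) {m : ℕ} (x : Fin m → Fin n)
    (σ : Equiv.Perm (Fin m)) : ℂ :=
  ∏ p ∈ Finset.univ.filter (fun p : Fin m × Fin m => p.1 < p.2 ∧ σ⁻¹ p.2 < σ⁻¹ p.1),
    q (x (σ⁻¹ p.2)) (x (σ⁻¹ p.1))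

/-- The full Fock space over `ℂⁿ`, realized as `ℓ²(Λ̃)`. -/
noncomputable abbrev FockSpace (n : ℕ) := lp (fun _ : List (Fin n) => ℂ) 2

/-- Coefficients of `T^p ω` in the basis `F k`: ballot/Dyck-path counts. -/
def cfun : ℕ → ℕ → ℕ
  | 0, 0 => 1
  | 0, _+1 => 0
  | p+1, 0 => cfun p 1
  | p+1, k+1 => cfun p k + cfun p (k+2)

/-- Closed form via the reflection principle. -/
def bfun (p k : ℕ) : ℤ :=
  if k ≤ p ∧ (p + k) % 2 = 0 then
    (p.choose ((p-k)/2) : ℤ) - (p.choose ((p+k)/2 + 1) : ℤ) else 0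

lemma choose_split (n j : ℕ) : ((n+1).choose (j+1) : ℤ) = n.choose j + n.choose (j+1) := by
  rw [Nat.choose_succ_succ']; push_cast; ring

lemma bfun_rec0 (p : ℕ) : bfun (p+1) 0 = bfun p 1 := by
  unfold bfun
  rcases Nat.even_or_odd p with hp | hp
  · obtain ⟨t, rfl⟩ := hp
    rw [if_neg (by omega), if_neg (by omega)]
  · obtain ⟨t, rfl⟩ := hp
    rw [if_pos (by omega), if_pos (by omega)]
    have e1 : (2*t+1+1-0)/2 = t+1 := by omega
    have e2 : (2*t+1+1+0)/2 + 1 = t+2 := by omega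
    have e3 : (2*t+1-1)/2 = t := by omega
    have e4 : (2*t+1+1)/2 + 1 = t+2 := by omega
    rw [e1, e2, e3]
    rw [show 2*t+1+1 = (2*t+1)+1 from rfl, choose_split (2*t+1) t, choose_split (2*t+1) (t+1)]
    ring

lemma bfun_recS (p k : ℕ) : bfun (p+1) (k+1) = bfun p k + bfun p (k+2) := by
  unfold bfun
  by_cases hpar : (p + k) % 2 = 0
  · by_cases hk : k + 2 ≤ p
    · obtain ⟨h, rfl⟩ : ∃ h, p = k + (2 * h + 2) := ⟨(p-k)/2 - 1, by omega⟩
      rw [if_pos (by omega), if_pos (by omega), if_pos (by omega)]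
      have e1 : (k + (2*h+2) + 1 - (k+1))/2 = h+1 := by omega
      have e2 : (k + (2*h+2) + 1 + (k+1))/2 + 1 = k + h + 3 := by omega
      have e3 : (k + (2*h+2) - k)/2 = h+1 := by omega
      have e4 : (k + (2*h+2) + k)/2 + 1 = k + h + 2 := by omega
      have e5 : (k + (2*h+2) - (k+2))/2 = h := by omega
      have e6 : (k + (2*h+2) + (k+2))/2 + 1 = k + h + 3 := by omega
      rw [e1, e2, e3, e4, e5, e6]
      rw [show k + (2*h+2) + 1 = (k + (2*h+2)) + 1 from rfl,
        show (h:ℕ)+1 = h+1 from rfl,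
        choose_split (k + (2*h+2)) h, choose_split (k + (2*h+2)) (k+h+2)]
      ring
    · by_cases hk2 : k = p
      · subst hk2
        rw [if_pos (by omega), if_pos (by omega), if_neg (by omega)]
        have e1 : (k+1-(k+1))/2 = 0 := by omega
        have e2 : (k+1+(k+1))/2 + 1 = k+2 := by omega
        have e3 : (k-k)/2 = 0 := by omega
        have e4 : (k+k)/2 + 1 = k+1 := by omega
        rw [e1, e2, e3, e4]
        rw [Nat.choose_eq_zero_of_lt (show k+1 < k+2 by omega),
          Nat.choose_eq_zero_of_lt (show k < k+1 by omega)]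
        simp [Nat.choose_zero_right]
      · rw [if_neg (by omega), if_neg (by omega), if_neg (by omega)]
        ring
  · rw [if_neg (by omega), if_neg (by omega), if_neg (by omega)]; ring

lemma cfun_eq_bfun : ∀ p k, (cfun p k : ℤ) = bfun p k := by
  intro p
  induction p with
  | zero =>
    intro k
    cases k with
    | zero => simp [cfun, bfun]
    | succ k => simp [cfun, bfun]
  | succ p ih =>
    intro k
    cases k with
    | zero => rw [show cfun (p+1) 0 = cfun p 1 from rfl, ih, bfun_rec0]
    | succ k =>
      rw [show cfun (p+1) (k+1) = cfun p k + cfun p (k+2) from rfl, bfun_recS]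
      push_cast [ih]; ring

lemma cfun_odd (p : ℕ) (hp : p % 2 = 1) : cfun p 0 = 0 := by
  have := cfun_eq_bfun p 0
  rw [bfun, if_neg (by omega)] at this
  exact_mod_cast this

lemma cfun_even (l : ℕ) : (cfun (2*l) 0 : ℤ) = ((2*l).choose l : ℤ) - ((2*l).choose (l+1) : ℤ) := by
  rw [cfun_eq_bfun, bfun, if_pos (by omega)]
  have e1 : (2*l-0)/2 = l := by omega
  have e2 : (2*l+0)/2 + 1 = l+1 := by omega
  rw [e1, e2]

lemma cfun_catalan (l : ℕ) :
    (cfun (2*l) 0 : ℂ) = ((l : ℂ) + 1)⁻¹ * ((2*l).choose l : ℂ) := by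
  have h0 : ((l:ℂ)+1) ≠ 0 := Nat.cast_add_one_ne_zero l
  have hc : (cfun (2*l) 0 : ℂ) = ((2*l).choose l : ℂ) - ((2*l).choose (l+1) : ℂ) := by
    exact_mod_cast congrArg (Int.cast : ℤ → ℂ) (cfun_even l)
  have key : ((2*l).choose (l+1) : ℂ) * ((l:ℂ)+1) = ((2*l).choose l : ℂ) * l := by
    have := Nat.choose_succ_right_eq (2*l) l
    have h2 : 2*l - l = l := by omega
    rw [h2] at this
    exact_mod_cast this
  rw [hc]
  field_simp
  linear_combination -key

set_option maxHeartbeats 1000000 in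
/-- Moments of `S_i + S_i^*` with respect to the vacuum state on the `q`-commuting Fock
space: odd moments vanish and the `2l`-th moment is the Catalan number
`C_l = (1/(l+1))·binom(2l, l)`; i.e. `S_i + S_i^*` has semicircular distribution. -/
theorem stmt17 {n : ℕ} (hn : 2 ≤ n) (q : Fin n → Fin n → ℂ)
    (hq1 : ∀ i, q i i = 1) (hq2 : ∀ i j, q j i = (q i j)⁻¹) (hq3 : ∀ i j, ‖q i j‖ = 1)
    (V : Fin n → FockSpace n →L[ℂ] FockSpace n)
    (hV : ∀ (i : Fin n) (α : List (Fin n)),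
      V i (lp.single 2 α (1 : ℂ)) = lp.single 2 (i :: α) (1 : ℂ))
    (Γq : Submodule ℂ (FockSpace n)) [CompleteSpace ↥Γq]
    (hΓ : (Γq : Set (FockSpace n))
      = {x : FockSpace n | ∀ (m : ℕ) (α : Fin m → Fin n) (σ : Equiv.Perm (Fin m)),
          x (List.ofFn fun i => α (σ⁻¹ i)) = qSigma q α σ * x (List.ofFn α)})
    (Q : FockSpace n →L[ℂ] FockSpace n)
    (hQmem : ∀ x, Q x ∈ Γq) (hQfix : ∀ x ∈ Γq, Q x = x)
    (hQorth : ∀ x : FockSpace n, ∀ y ∈ Γq, (inner ℂ (x - Q x) y : ℂ) = 0)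
    (hω : lp.single 2 ([] : List (Fin n)) (1 : ℂ) ∈ Γq) :
    letI S : Fin n → ↥Γq →L[ℂ] ↥Γq := fun i =>
      (Q.codRestrict Γq hQmem).comp ((V i).comp Γq.subtypeL)
    letI ω : ↥Γq := ⟨lp.single 2 ([] : List (Fin n)) (1 : ℂ), hω⟩
    ∀ (i : Fin n) (p : ℕ),
      (Odd p →
        (inner ℂ ω (((S i + ContinuousLinearMap.adjoint (S i)) ^ p) ω) : ℂ) = 0) ∧
      (∀ l : ℕ, p = 2 * l →
        (inner ℂ ω (((S i + ContinuousLinearMap.adjoint (S i)) ^ p) ω) : ℂ)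
          = (((l : ℂ) + 1))⁻¹ * (p.choose l : ℂ)) := by
  intro i p
  classical
  beta_reduce
  set Si : ↥Γq →L[ℂ] ↥Γq := (Q.codRestrict Γq hQmem).comp ((V i).comp Γq.subtypeL) with hSi
  set ω : ↥Γq := ⟨lp.single 2 ([] : List (Fin n)) (1 : ℂ), hω⟩ with hωdef
  obtain ⟨E, hE⟩ : ∃ E : ℕ → FockSpace n,
      ∀ k, E k = lp.single 2 (List.replicate k i) (1:ℂ) := ⟨_, fun _ => rfl⟩
  have hEmem : ∀ k, E k ∈ Γq := by
    intro k
    rw [hE k, ← SetLike.mem_coe, hΓ]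
    intro m α σ
    by_cases hα : List.ofFn α = List.replicate k i
    · have hmk : m = k := by
        have := congrArg List.length hα
        simpa using this
      have hαi : ∀ j, α j = i := by
        intro j
        have hmem : α j ∈ List.ofFn α := by
          rw [List.mem_ofFn]; exact ⟨j, rfl⟩
        rw [hα] at hmem
        exact List.eq_of_mem_replicate hmem
      have h2 : (List.ofFn fun j => α (σ⁻¹ j)) = List.replicate k i := by
        apply List.eq_replicate_iff.mpr
        constructor
        · simpa using hmk
        · intro b hb
          rw [List.mem_ofFn] at hb
          obtain ⟨j, rfl⟩ := hb
          exact hαi _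
      rw [hα, h2]
      have hq : qSigma q α σ = 1 := by
        unfold qSigma
        apply Finset.prod_eq_one
        intro x hx
        rw [hαi, hαi, hq1]
      rw [hq, one_mul]
    · have h2 : (List.ofFn fun j => α (σ⁻¹ j)) ≠ List.replicate k i := by
        intro hc
        apply hα
        have hmk : m = k := by
          have := congrArg List.length hc
          simpa using this
        apply List.eq_replicate_iff.mpr
        refine ⟨by simpa using hmk, ?_⟩
        intro b hb
        rw [List.mem_ofFn] at hb
        obtain ⟨j, rfl⟩ := hb
        have : α (σ⁻¹ (σ j)) = i := by
          have hmem : α (σ⁻¹ (σ j)) ∈ (List.ofFn fun j => α (σ⁻¹ j)) := by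
            rw [List.mem_ofFn]; exact ⟨σ j, rfl⟩
          rw [hc] at hmem
          exact List.eq_of_mem_replicate hmem
        simpa using this
      rw [lp.single_apply_ne _ _ _ h2, lp.single_apply_ne _ _ _ hα, mul_zero]
  set F : ℕ → ↥Γq := fun k => ⟨E k, hEmem k⟩ with hF
  have hFcoe : ∀ k, ((F k : ↥Γq) : FockSpace n) = E k := fun _ => rfl
  -- orthonormality
  have hFinner : ∀ j k, (⟪F j, F k⟫_ℂ) = if j = k then 1 else 0 := by
    intro j k
    rw [Submodule.coe_inner, hFcoe, hFcoe, hE j, hE k]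
    rw [lp.inner_single_left]
    by_cases hjk : j = k
    · subst hjk
      rw [lp.single_apply_self, if_pos rfl]
      simp
    · rw [lp.single_apply_ne, if_neg hjk]
      · simp
      · intro hc
        apply hjk
        have h := congrArg List.length hc
        simpa using h
  -- S action
  have hSF : ∀ k, Si (F k) = F (k+1) := by
    intro k
    apply Subtype.ext
    show Q (V i (E k)) = E (k+1)
    rw [hE k, hV i (List.replicate k i), ← List.replicate_succ, ← hE (k+1)]
    exact hQfix _ (hEmem (k+1))
  -- Q inner
  have hQinner : ∀ (x z : FockSpace n), z ∈ Γq → (⟪z, Q x⟫_ℂ) = ⟪z, x⟫_ℂ := by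
    intro x z hz
    have h := hQorth x z hz
    rw [inner_sub_left, sub_eq_zero] at h
    rw [← inner_conj_symm, ← h, inner_conj_symm]
  -- V inner
  have hVinner : ∀ (k : ℕ) (y : FockSpace n), (⟪E (k+1), V i y⟫_ℂ) = ⟪E k, y⟫_ℂ := by
    intro k y
    have hsum : HasSum (fun α : List (Fin n) => lp.single 2 α (y α)) y :=
      lp.hasSum_single (by norm_num) y
    have hsum2 : HasSum (fun α : List (Fin n) => ⟪E (k+1), V i (lp.single 2 α (y α))⟫_ℂ)
        (⟪E (k+1), V i y⟫_ℂ) := ((innerSL ℂ (E (k+1))).comp (V i)).hasSum hsum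
    have hterm : ∀ α : List (Fin n),
        (⟪E (k+1), V i (lp.single 2 α (y α))⟫_ℂ)
          = if α = List.replicate k i then y (List.replicate k i) else 0 := by
      intro α
      have h1 : (lp.single 2 α (y α) : FockSpace n) = y α • lp.single 2 α 1 := by
        rw [← lp.single_smul, smul_eq_mul, mul_one]
      rw [h1, map_smul, inner_smul_right, hV i α, hE (k+1),
        lp.inner_single_left]
      by_cases hα : α = List.replicate k i
      · subst hα
        rw [if_pos rfl, List.replicate_succ, lp.single_apply_self]
        simp [RCLike.inner_apply]
      · rw [if_neg hα, lp.single_apply_ne]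
        · simp
        · rw [List.replicate_succ]
          intro hc
          exact hα (List.cons_injective hc).symm
    have hsum3 : HasSum
        (fun α : List (Fin n) => if α = List.replicate k i then y (List.replicate k i) else 0)
        (⟪E (k+1), V i y⟫_ℂ) := by
      simpa only [hterm] using hsum2
    have h4 := hsum3.unique (hasSum_ite_eq (List.replicate k i) (y (List.replicate k i)))
    rw [h4, hE k, lp.inner_single_left]
    simp [RCLike.inner_apply]
  have hVinner0 : ∀ (y : FockSpace n), (⟪E 0, V i y⟫_ℂ) = 0 := by
    intro y
    have hsum : HasSum (fun α : List (Fin n) => lp.single 2 α (y α)) y :=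
      lp.hasSum_single (by norm_num) y
    have hsum2 : HasSum (fun α : List (Fin n) => ⟪E 0, V i (lp.single 2 α (y α))⟫_ℂ)
        (⟪E 0, V i y⟫_ℂ) := ((innerSL ℂ (E 0)).comp (V i)).hasSum hsum
    have hterm : ∀ α : List (Fin n),
        (⟪E 0, V i (lp.single 2 α (y α))⟫_ℂ) = 0 := by
      intro α
      have h1 : (lp.single 2 α (y α) : FockSpace n) = y α • lp.single 2 α 1 := by
        rw [← lp.single_smul, smul_eq_mul, mul_one]
      rw [h1, map_smul, inner_smul_right, hV i α, hE 0,
        lp.inner_single_left, lp.single_apply_ne]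
      · simp
      · simp
    have hsum3 : HasSum (fun _ : List (Fin n) => (0:ℂ)) (⟪E 0, V i y⟫_ℂ) := by
      simpa only [hterm] using hsum2
    exact hsum3.unique hasSum_zero
  -- adjoint action
  have hScoe : ∀ y : ↥Γq, ((Si y : ↥Γq) : FockSpace n) = Q (V i (y : FockSpace n)) :=
    fun _ => rfl
  have hSadj : ∀ k, ContinuousLinearMap.adjoint Si (F (k+1)) = F k := by
    intro k
    apply ext_inner_right ℂ
    intro y
    rw [ContinuousLinearMap.adjoint_inner_left]
    rw [Submodule.coe_inner, Submodule.coe_inner, hFcoe, hFcoe, hScoe]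
    rw [hQinner _ _ (hEmem (k+1)), hVinner k]
  have hSadj0 : ContinuousLinearMap.adjoint Si (F 0) = 0 := by
    apply ext_inner_right ℂ
    intro y
    rw [ContinuousLinearMap.adjoint_inner_left]
    rw [Submodule.coe_inner, hFcoe, hScoe]
    rw [hQinner _ _ (hEmem 0), hVinner0, inner_zero_left]
  set T : ↥Γq →L[ℂ] ↥Γq := Si + ContinuousLinearMap.adjoint Si with hT
  have hTadj : ContinuousLinearMap.adjoint T = T := by
    rw [hT, map_add, ContinuousLinearMap.adjoint_adjoint, add_comm]
  have hω0 : ω = F 0 := by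
    apply Subtype.ext
    rw [hFcoe 0, hE 0]
    rfl
  -- the key moment computation
  have key : ∀ (p k : ℕ), (⟪F k, (T ^ p) (F 0)⟫_ℂ) = (cfun p k : ℂ) := by
    intro p
    induction p with
    | zero =>
      intro k
      rw [pow_zero, ContinuousLinearMap.one_apply, hFinner]
      cases k with
      | zero => simp [cfun]
      | succ k => simp [cfun]
    | succ p ih =>
      intro k
      have hp : (T^(p+1)) (F 0) = T ((T^p) (F 0)) := by
        rw [pow_succ']; rfl
      rw [hp]
      have hsa : (⟪F k, T ((T^p) (F 0))⟫_ℂ) = ⟪T (F k), (T^p) (F 0)⟫_ℂ := by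
        rw [← ContinuousLinearMap.adjoint_inner_left, hTadj]
      rw [hsa]
      cases k with
      | zero =>
        have hT0 : T (F 0) = F 1 := by
          rw [hT, ContinuousLinearMap.add_apply, hSF 0, hSadj0, add_zero]
        rw [hT0, ih 1]
        norm_cast
      | succ k =>
        have hTk : T (F (k+1)) = F (k+2) + F k := by
          rw [hT, ContinuousLinearMap.add_apply, hSF (k+1), hSadj k]
        rw [hTk, inner_add_left, ih k, ih (k+2)]
        rw [show cfun (p+1) (k+1) = cfun p k + cfun p (k+2) from rfl]
        push_cast
        ring
  constructor
  · intro hodd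
    rw [hω0]
    rw [key p 0, cfun_odd p (Nat.odd_iff.mp hodd)]
    norm_cast
  · intro l hl
    subst hl
    rw [hω0, key (2*l) 0, cfun_catalan l]
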